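/- Let μ1 be the Deferred Acceptance match and μ2 the match produced from μ1 by the restricted Top Trading Cycles stage. If a coalition A between-group blocks μ2 by between-group enforcing a match ν that A prefers to μ2, then A also between-group blocks μ1 by between-group enforcing the same ν over μ1. -/

import Mathlib

/-- A school choice problem.  Students `I` and schools `S` are finite types.
A match sends each student to `some s` (a school) or `none` (unmatched, i.e.
matched to herself).  Strict preferences/priorities are encoded by injective
numerical rank functions (higher value = more preferred / higher priority);
the weak between-group priority is encoded by an arbitrary rank function,
whose level sets are the priority groups. -/
structure SchoolChoice (I S : Type*) [Fintype I] [Fintype S] where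
  /-- the capacity of each school -/
  q : S → ℕ
  /-- each school has at least one seat -/
  q_pos : ∀ s, 1 ≤ q s
  /-- student `i`'s strict preference over `S ∪ {i}` (`none` = being unmatched) -/
  pref : I → Option S → ℕ
  pref_inj : ∀ i, Function.Injective (pref i)
  /-- the between-group priority of school `s` (a weak order on students) -/
  btw : S → I → ℕ
  /-- the within-group priority of school `s` (a strict total order on students) -/
  wthn : S → I → ℕ
  wthn_inj : ∀ s, Function.Injective (wthn s)
  /-- the within-group priority refines the between-group priority -/
  refines : ∀ s i j, btw s i < btw s j → wthn s i < wthn s j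

namespace SchoolChoice

variable {I S : Type*} [Fintype I] [Fintype S] (P : SchoolChoice I S)

/-- `μ` is a match: no school is assigned more students than its capacity. -/
def IsMatch (μ : I → Option S) : Prop :=
  ∀ s : S, {i | μ i = some s}.ncard ≤ P.q s

/-- `μ` is individually rational: every student weakly prefers her assignment
to being unmatched. -/
def IndRational (μ : I → Option S) : Prop :=
  ∀ i, P.pref i none ≤ P.pref i (μ i)

/-- Coalition `A` prefers `ν` to `μ`: all members weakly, some member strictly. -/
def Prefers (A : Set I) (ν μ : I → Option S) : Prop :=
  (∀ i ∈ A, P.pref i (μ i) ≤ P.pref i (ν i)) ∧ ∃ i ∈ A, P.pref i (μ i) < P.pref i (ν i)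

/-- The priority group `[i]_s` of student `i` at school `s`. -/
def Group (s : S) (i : I) : Set I := {j | P.btw s j = P.btw s i}

/-- `A` can between-group enforce `ν` over `μ`: every member assigned a school
by `ν` either displaces a student of strictly lower between-group priority or
takes an empty seat (a student can always enforce becoming unmatched). -/
def BtwEnforce (A : Set I) (ν μ : I → Option S) : Prop :=
  ∀ i ∈ A, ∀ s, ν i = some s →
    (∃ j, μ j = some s ∧ P.btw s j < P.btw s i) ∨ {j | μ j = some s}.ncard < P.q s

/-- `A` between-group blocks `μ`. -/
def BtwBlocks (A : Set I) (μ : I → Option S) : Prop :=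
  ∃ ν, P.IsMatch ν ∧ P.BtwEnforce A ν μ ∧ P.Prefers A ν μ

/-- The responsive set extension `A ≿_s B` of the between-group priority:
`B` is no larger than `A`, and the students of `B` can be paired injectively
with students of `A` of weakly higher between-group priority. -/
def SetGE (s : S) (A B : Set I) : Prop :=
  B.ncard ≤ A.ncard ∧
    ∃ g : I → I, Set.InjOn g B ∧ Set.MapsTo g B A ∧ ∀ b ∈ B, P.btw s b ≤ P.btw s (g b)

/-- Set indifference `A ∼_s B` under the responsive extension. -/
def SetSim (s : S) (A B : Set I) : Prop := P.SetGE s A B ∧ P.SetGE s B A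

/-- The within-group upper contour set `U_s(i)`: the students in `i`'s priority
group at `s` with weakly higher within-group priority. -/
def UCS (s : S) (i : I) : Set I :=
  {j | P.btw s j = P.btw s i ∧ P.wthn s i ≤ P.wthn s j}

/-- The pairs `(i, j)` where `i ∈ A` is sent to `s` by `ν` and `j` is a
within-group interrupter of `i` (i.e. `j ∈ U_s(i) \ A`).  Its cardinality is
the total number of within-group interrupters across all members of `A`
matched to `s` by `ν`. -/
def InterruptPairs (A : Set I) (ν : I → Option S) (s : S) : Set (I × I) :=
  {p | p.1 ∈ A ∧ ν p.1 = some s ∧ p.2 ∈ P.UCS s p.1 ∧ p.2 ∉ A}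

/-- `A` can within-group enforce `ν` over `μ`: for every school in `ν(A)`,
(1) `ν⁻¹(s) ∼_s μ⁻¹(s)` and (2) the total number of within-group interrupters
is at most `q s - |ν⁻¹(s)|`. -/
def WthnEnforce (A : Set I) (ν μ : I → Option S) : Prop :=
  ∀ s : S, (∃ i ∈ A, ν i = some s) →
    P.SetSim s {j | ν j = some s} {j | μ j = some s} ∧
    (P.InterruptPairs A ν s).ncard ≤ P.q s - {j | ν j = some s}.ncard

/-- `A` within-group blocks `μ`. -/
def WthnBlocks (A : Set I) (μ : I → Option S) : Prop :=
  ∃ ν, P.IsMatch ν ∧ P.WthnEnforce A ν μ ∧ P.Prefers A ν μ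

/-- The unified core: no coalition between-group blocks nor within-group
blocks the match. -/
def UnifiedCore (μ : I → Option S) : Prop :=
  (∀ A : Set I, ¬ P.BtwBlocks A μ) ∧ ∀ A : Set I, ¬ P.WthnBlocks A μ

/-- A match is fair (w.r.t. the within-group priorities, à la Gale–Shapley):
no student prefers a school that has an empty seat or admits a student of
strictly lower within-group priority. -/
def Fair (μ : I → Option S) : Prop :=
  ¬ ∃ (i : I) (s : S), P.pref i (μ i) < P.pref i (some s) ∧
    ((∃ j, μ j = some s ∧ P.wthn s j < P.wthn s i) ∨ {j | μ j = some s}.ncard < P.q s)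

/-! ### The student-proposing Deferred Acceptance algorithm,
specified relationally.  The state is the map `R` sending each student to the
set of schools that have rejected her so far. -/

/-- Given rejections `R`, student `i` currently proposes to `o`: `o` is not a
school that rejected `i`, and `o` is her most-preferred such option in
`S ∪ {i}`. -/
def ProposesTo (R : I → Set S) (i : I) (o : Option S) : Prop :=
  (∀ s, o = some s → s ∉ R i) ∧
  ∀ o' : Option S, (∀ s, o' = some s → s ∉ R i) → P.pref i o' ≤ P.pref i o

/-- Given rejections `R`, school `s` now rejects `i`: `i` proposes to `s` and
at least `q s` current proposers have strictly higher within-group priority. -/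
def Rejects (R : I → Set S) (s : S) (i : I) : Prop :=
  P.ProposesTo R i (some s) ∧
  P.q s ≤ {j | P.ProposesTo R j (some s) ∧ P.wthn s i < P.wthn s j}.ncard

/-- One round of Deferred Acceptance: some school is over-demanded, and every
over-demanded school rejects all but its `≻*`-top `q s` proposers. -/
def DAStep (R R' : I → Set S) : Prop :=
  (∃ s, P.q s < {i | P.ProposesTo R i (some s)}.ncard) ∧
  ∀ i, R' i = R i ∪ {s | P.Rejects R s i}

/-- Deferred Acceptance terminates: no school is over-demanded. -/
def DATerminal (R : I → Set S) : Prop :=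
  ∀ s, {i | P.ProposesTo R i (some s)}.ncard ≤ P.q s

/-- `μ1` is the outcome of the student-proposing Deferred Acceptance
algorithm: starting from no rejections, rounds are iterated until no school is
over-demanded, and every student is matched to the agent she last proposed to. -/
def IsDAOutcome (μ1 : I → Option S) : Prop :=
  ∃ (n : ℕ) (R : ℕ → I → Set S),
    (∀ i, R 0 i = ∅) ∧ (∀ k < n, P.DAStep (R k) (R (k + 1))) ∧
    P.DATerminal (R n) ∧ ∀ i, P.ProposesTo (R n) i (μ1 i)

/-! ### The restricted Top Trading Cycles stage, starting from a match `μ1`,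
specified relationally.  The state is the pair of the set of active students
and the current assignment. -/

/-- Student `i` is initially active in the TTC stage: she is matched by `μ1`
to a school at which she lies in the lowest priority group among the students
matched there. -/
def InitActive (μ1 : I → Option S) (i : I) : Prop :=
  ∃ s, μ1 i = some s ∧ ∀ j, μ1 j = some s → P.btw s i ≤ P.btw s j

/-- School `s` is admissible to student `i` (given active students `Act`):
some active student assigned to `s` by `μ1` is in the same priority group as
`i` at `s`.  (In particular `s` is then an active school.) -/
def Admissible (μ1 : I → Option S) (Act : Set I) (i : I) (s : S) : Prop :=
  ∃ j ∈ Act, μ1 j = some s ∧ P.btw s i = P.btw s j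

/-- Active student `i` points to school `s`: `s` is her most-preferred
admissible active school. -/
def StuPoints (μ1 : I → Option S) (Act : Set I) (i : I) (s : S) : Prop :=
  i ∈ Act ∧ P.Admissible μ1 Act i s ∧
  ∀ s', P.Admissible μ1 Act i s' → P.pref i (some s') ≤ P.pref i (some s)

/-- Active school `s` points to student `i`: `i` is the `≻*_s`-highest active
student in `μ1⁻¹(s)`. -/
def SchPoints (μ1 : I → Option S) (Act : Set I) (s : S) (i : I) : Prop :=
  i ∈ Act ∧ μ1 i = some s ∧ ∀ j ∈ Act, μ1 j = some s → P.wthn s j ≤ P.wthn s i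

/-- A (pointing) cycle `i₁, s₁, …, iₙ, sₙ` of distinct active students and
active schools: each student `c k` points to school `d k`, and each school
`d k` points to the cyclically next student `c (k+1)`. -/
def IsCycle (μ1 : I → Option S) (Act : Set I) {n : ℕ}
    (c : Fin (n + 1) → I) (d : Fin (n + 1) → S) : Prop :=
  Function.Injective c ∧ Function.Injective d ∧
  (∀ k, P.StuPoints μ1 Act (c k) (d k)) ∧
  ∀ k, P.SchPoints μ1 Act (d k) (c (k + 1))

/-- One round of the restricted TTC stage: a cycle forms, each student on the
cycle is assigned the school she points to and is deactivated; all other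
assignments are unchanged. -/
def TTCStep (μ1 : I → Option S) (st st' : Set I × (I → Option S)) : Prop :=
  ∃ (n : ℕ) (c : Fin (n + 1) → I) (d : Fin (n + 1) → S),
    P.IsCycle μ1 st.1 c d ∧
    st'.1 = st.1 \ Set.range c ∧
    (∀ k, st'.2 (c k) = some (d k)) ∧
    ∀ i, i ∉ Set.range c → st'.2 i = st.2 i

/-- `μ2` is the outcome of the restricted Top Trading Cycles stage starting
from `μ1`: beginning with the initially active students and assignment `μ1`,
rounds are iterated until no student is active. -/
def IsTTCOutcome (μ1 μ2 : I → Option S) : Prop :=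
  ∃ (m : ℕ) (st : ℕ → Set I × (I → Option S)),
    st 0 = ({i | P.InitActive μ1 i}, μ1) ∧
    (∀ k < m, P.TTCStep μ1 (st k) (st (k + 1))) ∧
    (st m).1 = ∅ ∧ μ2 = (st m).2

end SchoolChoice

open SchoolChoice in
/-- if a coalition between-group blocks `μ2` by between-group
enforcing `ν`, then it also between-group blocks `μ1` by between-group
enforcing the same `ν`. -/
theorem between_block_transfers {I S : Type*} [Fintype I] [Fintype S]
    (P : SchoolChoice I S) (μ1 μ2 : I → Option S)
    (h1 : P.IsDAOutcome μ1) (h2 : P.IsTTCOutcome μ1 μ2)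
    (A : Set I) (ν : I → Option S) (hν : P.IsMatch ν)
    (henf : P.BtwEnforce A ν μ2) (hpref : P.Prefers A ν μ2) :
    P.BtwEnforce A ν μ1 ∧ P.Prefers A ν μ1 := by
  classical
  obtain ⟨m, st, hst0, hsteps, hempty, hμ2⟩ := h2
  -- invariant along the TTC stage
  have key : ∀ k, k ≤ m →
      ((st k).1 ⊆ {i | P.InitActive μ1 i}) ∧
      (∃ σ : Equiv.Perm I, (∀ i ∈ (st k).1, σ i = i) ∧ ∀ i, (st k).2 i = μ1 (σ i)) ∧
      (∀ i, P.pref i (μ1 i) ≤ P.pref i ((st k).2 i)) ∧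
      (∀ i s, (st k).2 i = some s → ∃ j, μ1 j = some s ∧ P.btw s j = P.btw s i) := by
    intro k
    induction k with
    | zero =>
      intro _
      rw [hst0]
      exact ⟨fun i hi => hi, ⟨Equiv.refl I, fun i _ => rfl, fun i => rfl⟩,
        fun i => le_refl _, fun i s hs => ⟨i, hs, rfl⟩⟩
    | succ k ih =>
      intro hk
      obtain ⟨hsub, ⟨σ0, hσfix, hσ⟩, hpref0, hgrp⟩ := ih (Nat.le_of_succ_le hk)
      obtain ⟨n, c, d, ⟨hcinj, hdinj, hstu, hsch⟩, hact', hassign, hother⟩ := hsteps k hk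
      -- the cycle permutation
      set f : I → I := fun i => if h : ∃ k', c k' = i then c (Classical.choose h + 1) else i
        with hfdef
      have hfc : ∀ k', f (c k') = c (k' + 1) := by
        intro k'
        have h : ∃ k'', c k'' = c k' := ⟨k', rfl⟩
        have hch : Classical.choose h = k' := hcinj (Classical.choose_spec h)
        simp only [hfdef, dif_pos h, hch]
      have hfnot : ∀ i, i ∉ Set.range c → f i = i := by
        intro i hi
        have h : ¬ ∃ k', c k' = i := by
          rintro ⟨k', rfl⟩; exact hi ⟨k', rfl⟩
        simp only [hfdef, dif_neg h]
      have hfinj : Function.Injective f := by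
        intro a b hab
        by_cases ha : ∃ k', c k' = a
        · obtain ⟨ka, rfl⟩ := ha
          by_cases hb : ∃ k', c k' = b
          · obtain ⟨kb, rfl⟩ := hb
            rw [hfc, hfc] at hab
            have h1 : ka + 1 = kb + 1 := hcinj hab
            have h2 : ka = kb := add_right_cancel h1
            rw [h2]
          · rw [hfc, hfnot b (fun hb' => hb (by rcases hb' with ⟨k', hk'⟩; exact ⟨k', hk'⟩))] at hab
            exact absurd ⟨ka + 1, hab⟩ hb
        · have hfa : f a = a := hfnot a (fun ha' => ha (by rcases ha' with ⟨k', hk'⟩; exact ⟨k', hk'⟩))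
          by_cases hb : ∃ k', c k' = b
          · obtain ⟨kb, rfl⟩ := hb
            rw [hfa, hfc] at hab
            exact absurd ⟨kb + 1, hab.symm⟩ ha
          · have hfb : f b = b := hfnot b (fun hb' => hb (by rcases hb' with ⟨k', hk'⟩; exact ⟨k', hk'⟩))
            rw [hfa, hfb] at hab; exact hab
      have hfbij : Function.Bijective f := Finite.injective_iff_bijective.mp hfinj
      set σf := Equiv.ofBijective f hfbij with hσfdef
      set σ' := σf.trans σ0 with hσ'def
      have hσ'app : ∀ i, σ' i = σ0 (f i) := fun i => rfl
      refine ⟨?_, ⟨σ', ?_, ?_⟩, ?_, ?_⟩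
      · rw [hact']; exact fun i hi => hsub hi.1
      · intro i hi
        rw [hact'] at hi
        rw [hσ'app, hfnot i hi.2, hσfix i hi.1]
      · intro i
        by_cases hi : i ∈ Set.range c
        · obtain ⟨k', rfl⟩ := hi
          rw [hassign k', hσ'app, hfc k', hσfix _ (hsch k').1, (hsch k').2.1]
        · rw [hother i hi, hσ'app, hfnot i hi, hσ i]
      · intro i
        by_cases hi : i ∈ Set.range c
        · obtain ⟨k', rfl⟩ := hi
          rw [hassign k']
          obtain ⟨s0, hs0, _⟩ := hsub (hstu k').1
          have hadm : P.Admissible μ1 (st k).1 (c k') s0 := ⟨c k', (hstu k').1, hs0, rfl⟩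
          have := (hstu k').2.2 s0 hadm
          rw [hs0]
          exact this
        · rw [hother i hi]; exact hpref0 i
      · intro i s hs
        by_cases hi : i ∈ Set.range c
        · obtain ⟨k', rfl⟩ := hi
          rw [hassign k'] at hs
          have hds : d k' = s := Option.some.inj hs
          subst hds
          obtain ⟨j, _, hjμ1, hbtw⟩ := (hstu k').2.1
          exact ⟨j, hjμ1, hbtw.symm⟩
        · rw [hother i hi] at hs; exact hgrp i s hs
  obtain ⟨_, ⟨σ, _, hσ⟩, hpref0, hgrp⟩ := key m le_rfl
  subst hμ2
  have hcard : ∀ s, {j | (st m).2 j = some s}.ncard = {j | μ1 j = some s}.ncard := by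
    intro s
    have heq : {j | (st m).2 j = some s} = σ ⁻¹' {j | μ1 j = some s} := by
      ext j; simp only [Set.mem_setOf_eq, Set.mem_preimage, hσ j]
    rw [heq, ← Equiv.image_symm_eq_preimage]
    exact Set.ncard_image_of_injective _ σ.symm.injective
  constructor
  · intro i hi s hs
    rcases henf i hi s hs with ⟨j, hj, hlt⟩ | hlt
    · obtain ⟨j', hj', hbtw⟩ := hgrp j s hj
      exact Or.inl ⟨j', hj', by rw [hbtw]; exact hlt⟩
    · rw [hcard s] at hlt
      exact Or.inr hlt
  · refine ⟨fun i hi => le_trans (hpref0 i) (hpref.1 i hi), ?_⟩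
    obtain ⟨i, hi, hlt⟩ := hpref.2
    exact ⟨i, hi, lt_of_le_of_lt (hpref0 i) hlt⟩
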